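/- If φ is a nonvanishing holomorphic function on the unit disc with bounded argument (i.e., φ = exp(g) with |Im g| bounded), then there exist constants A > 0 and c > 0 such that |φ(z)| ≥ A·(1 - |z|)^c for all z in the disc. -/

import Mathlib

open Complex Metric Set

lemma stmt3_deriv_bound (g : ℂ → ℂ) (M : ℝ) (hM : 0 ≤ M)
    (hg : DifferentiableOn ℂ g (ball (0:ℂ) 1))
    (hIm : ∀ z ∈ ball (0:ℂ) 1, |(g z).im| ≤ M)
    {z₀ : ℂ} (hz₀ : z₀ ∈ ball (0:ℂ) 1) :
    ‖deriv g z₀‖ ≤ (8*(M+1)/Real.pi) / (1 - ‖z₀‖) := by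
  set a : ℝ := Real.pi / (2*(M+1)) with ha_def
  have hM1 : (0:ℝ) < M + 1 := by linarith
  have ha : 0 < a := div_pos Real.pi_pos (by linarith)
  have haM : a * M < Real.pi / 2 := by
    rw [ha_def, div_mul_eq_mul_div, div_lt_div_iff₀ (by linarith) two_pos]
    nlinarith [Real.pi_pos]
  set b : ℝ := (g z₀).re with hb
  set u : ℂ → ℂ := fun z => Complex.exp (↑a * (g z - ↑b)) with hu_def
  have hwim : ∀ z : ℂ, (↑a * (g z - ↑b)).im = a * (g z).im := by
    intro z; simp [Complex.mul_im]
  have hure : ∀ z ∈ ball (0:ℂ) 1, 0 < (u z).re := by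
    intro z hz
    have him' : |a * (g z).im| < Real.pi / 2 := by
      rw [abs_mul, abs_of_pos ha]
      calc a * |(g z).im| ≤ a * M := by gcongr; exact hIm z hz
      _ < _ := haM
    have hcos : 0 < Real.cos (a * (g z).im) :=
      Real.cos_pos_of_mem_Ioo ⟨by linarith [(abs_lt.1 him').1], (abs_lt.1 him').2⟩
    rw [hu_def]; simp only
    rw [Complex.exp_re, hwim]
    positivity
  have hden : ∀ z ∈ ball (0:ℂ) 1, u z + 1 ≠ 0 := by
    intro z hz h
    have h0 : (u z + 1).re = 0 := by rw [h]; simp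
    rw [Complex.add_re, Complex.one_re] at h0
    linarith [hure z hz]
  set ψ : ℂ → ℂ := fun z => (u z - 1)/(u z + 1) with hψ_def
  have hu_diff : DifferentiableOn ℂ u (ball (0:ℂ) 1) :=
    ((hg.sub (differentiableOn_const _)).const_mul _).cexp
  have hψ_diff : DifferentiableOn ℂ ψ (ball (0:ℂ) 1) :=
    (hu_diff.sub (differentiableOn_const 1)).div (hu_diff.add (differentiableOn_const 1)) hden
  have hψ_lt : ∀ z ∈ ball (0:ℂ) 1, ‖ψ z‖ < 1 := by
    intro z hz
    have h1 : ‖u z - 1‖ < ‖u z + 1‖ := by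
      have hsq : ‖u z - 1‖ ^ 2 < ‖u z + 1‖ ^ 2 := by
        rw [Complex.sq_norm, Complex.sq_norm, Complex.normSq_apply, Complex.normSq_apply]
        simp only [Complex.add_re, Complex.add_im, Complex.sub_re, Complex.sub_im,
          Complex.one_re, Complex.one_im]
        nlinarith [hure z hz]
      exact lt_of_pow_lt_pow_left₀ 2 (norm_nonneg _) hsq
    rw [hψ_def]; simp only [norm_div]
    rw [div_lt_one (lt_of_le_of_lt (norm_nonneg _) h1)]
    exact h1
  have hz₀1 : ‖z₀‖ < 1 := by
    rwa [mem_ball_zero_iff] at hz₀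
  set R : ℝ := 1 - ‖z₀‖ with hR
  have hR0 : 0 < R := by rw [hR]; linarith
  have hsub : ball z₀ R ⊆ ball (0:ℂ) 1 := by
    apply ball_subset_ball'
    rw [dist_zero_right, hR]
    linarith
  have hmaps : MapsTo ψ (ball z₀ R) (ball (ψ z₀) 2) := by
    intro z hz
    rw [mem_ball, dist_eq_norm]
    calc ‖ψ z - ψ z₀‖ ≤ ‖ψ z‖ + ‖ψ z₀‖ := by
          simpa [sub_eq_add_neg] using norm_add_le (ψ z) (-ψ z₀)
    _ < 2 := by linarith [hψ_lt z (hsub hz), hψ_lt z₀ hz₀]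
  have hschwarz : ‖deriv ψ z₀‖ ≤ 2 / R :=
    Complex.norm_deriv_le_div_of_mapsTo_ball (hψ_diff.mono hsub) (hmaps.mono_right ball_subset_closedBall) hR0
  have hgd : HasDerivAt g (deriv g z₀) z₀ :=
    (hg.differentiableAt (isOpen_ball.mem_nhds hz₀)).hasDerivAt
  have hud : HasDerivAt u (u z₀ * (↑a * deriv g z₀)) z₀ :=
    ((hgd.sub_const _).const_mul _).cexp
  have hψd : HasDerivAt ψ
      ((u z₀ * (↑a * deriv g z₀) * (u z₀ + 1) - (u z₀ - 1) * (u z₀ * (↑a * deriv g z₀)))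
        / (u z₀ + 1) ^ 2) z₀ :=
    (hud.sub_const 1).div (hud.add_const 1) (hden z₀ hz₀)
  have hderiv_eq : deriv ψ z₀ = 2 * (↑a * deriv g z₀) * u z₀ / (u z₀ + 1) ^ 2 := by
    rw [hψd.deriv]; ring
  have huz₀ : ‖u z₀‖ = 1 := by
    rw [hu_def]; simp only
    rw [Complex.norm_exp]
    have h0 : (↑a * (g z₀ - ↑b)).re = 0 := by
      simp [Complex.mul_re, hb]
    rw [h0, Real.exp_zero]
  have habs_den_pos : 0 < ‖u z₀ + 1‖ := by
    simpa [norm_pos_iff] using hden z₀ hz₀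
  have habs_den : ‖u z₀ + 1‖ ^ 2 ≤ 4 := by
    rw [Complex.sq_norm, Complex.normSq_apply]
    simp only [Complex.add_re, Complex.add_im, Complex.one_re, Complex.one_im]
    have h1 : (u z₀).re ≤ 1 := le_trans (Complex.re_le_norm _) (le_of_eq huz₀)
    have h2 : (u z₀).re * (u z₀).re + (u z₀).im * (u z₀).im = 1 := by
      have h3 := Complex.sq_norm (u z₀)
      rw [huz₀, Complex.normSq_apply] at h3
      nlinarith [h3]
    nlinarith [h2]
  have hEabs : ‖deriv ψ z₀‖
      = 2 * a * ‖deriv g z₀‖ / ‖u z₀ + 1‖ ^ 2 := by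
    rw [hderiv_eq, norm_div, norm_pow, norm_mul, norm_mul, norm_mul, huz₀, Complex.norm_two,
      Complex.norm_real, Real.norm_eq_abs, abs_of_pos ha]
    ring
  have hfinal : 2 * a * ‖deriv g z₀‖ / 4 ≤ 2 / R := by
    refine le_trans ?_ hschwarz
    rw [hEabs]
    exact div_le_div_of_nonneg_left (by positivity) (pow_pos habs_den_pos 2) habs_den
  have h5 : a * ‖deriv g z₀‖ * R ≤ 4 := by
    rw [div_le_div_iff₀ (by norm_num) hR0] at hfinal
    nlinarith [hfinal]
  have ha' : a * (8*(M+1)/Real.pi) = 4 := by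
    rw [ha_def]
    field_simp
    ring
  rw [le_div_iff₀ hR0]
  have h6 : a * (‖deriv g z₀‖ * R) ≤ a * (8*(M+1)/Real.pi) := by
    rw [ha']; nlinarith [h5]
  exact le_of_mul_le_mul_left h6 ha

/-- A nonvanishing holomorphic function `φ` on the unit disc with bounded
argument (i.e. `φ = exp g` with `|Im g| ≤ M`) satisfies `|φ(z)| ≥ A·(1-|z|)^c`. -/
theorem stmt3 (φ g : ℂ → ℂ) (M : ℝ)
    (hφ : DifferentiableOn ℂ φ (ball (0:ℂ) 1))
    (hg : DifferentiableOn ℂ g (ball (0:ℂ) 1))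
    (hnz : ∀ z ∈ ball (0:ℂ) 1, φ z ≠ 0)
    (hexp : ∀ z ∈ ball (0:ℂ) 1, Complex.exp (g z) = φ z)
    (hIm : ∀ z ∈ ball (0:ℂ) 1, |(g z).im| ≤ M) :
    ∃ A c : ℝ, 0 < A ∧ 0 < c ∧ ∀ z ∈ ball (0:ℂ) 1,
      A * (1 - ‖z‖) ^ c ≤ ‖φ z‖ := by
  have h0mem : (0:ℂ) ∈ ball (0:ℂ) 1 := mem_ball_self one_pos
  have hM : 0 ≤ M := le_trans (abs_nonneg _) (hIm 0 h0mem)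
  set c : ℝ := 8*(M+1)/Real.pi with hc_def
  have hc : 0 < c := div_pos (by linarith) Real.pi_pos
  refine ⟨Real.exp ((g 0).re), c, Real.exp_pos _, hc, ?_⟩
  intro z hz
  have hz1 : ‖z‖ < 1 := by rwa [mem_ball_zero_iff] at hz
  set r := ‖z‖ with hr_def
  have hr0 : 0 ≤ r := norm_nonneg z
  have h1r : 0 < 1 - r := by linarith
  have hmem : ∀ t : ℝ, t ∈ Set.Icc (0:ℝ) 1 → (t:ℂ) * z ∈ ball (0:ℂ) 1 := by
    intro t ht
    rw [mem_ball_zero_iff, norm_mul, Complex.norm_real, Real.norm_eq_abs,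
      _root_.abs_of_nonneg ht.1]
    nlinarith [ht.1, ht.2]
  have habs_t : ∀ t : ℝ, 0 ≤ t → ‖(t:ℂ) * z‖ = t * r := by
    intro t ht
    rw [norm_mul, Complex.norm_real, Real.norm_eq_abs, _root_.abs_of_nonneg ht]
  have hgana : AnalyticOnNhd ℂ g (ball (0:ℂ) 1) := hg.analyticOnNhd isOpen_ball
  have hdc : ContinuousOn (deriv g) (ball (0:ℂ) 1) := hgana.deriv.continuousOn
  have hFd : ∀ t ∈ Set.uIcc (0:ℝ) 1,
      HasDerivAt (fun s : ℝ => g ((s:ℂ)*z)) (deriv g ((t:ℂ)*z) * z) t := by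
    intro t ht
    rw [Set.uIcc_of_le zero_le_one] at ht
    have hmem' := hmem t ht
    have hinner : HasDerivAt (fun w : ℂ => w * z) z ((t:ℂ)) := by
      simpa using (hasDerivAt_id ((t:ℂ))).mul_const z
    have houter : HasDerivAt g (deriv g ((t:ℂ)*z)) ((t:ℂ)*z) :=
      (hg.differentiableAt (isOpen_ball.mem_nhds hmem')).hasDerivAt
    have h := (houter.comp ((t:ℂ)) hinner).comp_ofReal
    simpa [Function.comp] using h
  have hint : IntervalIntegrable (fun t : ℝ => deriv g ((t:ℂ)*z) * z)
      MeasureTheory.volume 0 1 := by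
    apply ContinuousOn.intervalIntegrable
    rw [Set.uIcc_of_le zero_le_one]
    exact (hdc.comp (Continuous.continuousOn (by continuity)) hmem).mul continuousOn_const
  have hFTC : ∫ t in (0:ℝ)..1, deriv g ((t:ℂ)*z) * z = g z - g 0 := by
    have h := intervalIntegral.integral_eq_sub_of_hasDerivAt hFd hint
    simpa using h
  have hptb : ∀ t : ℝ, t ∈ Set.Ioc (0:ℝ) 1 →
      ‖deriv g ((t:ℂ)*z) * z‖ ≤ c * r / (1 - t * r) := by
    intro t ht
    have ht' : t ∈ Set.Icc (0:ℝ) 1 := ⟨le_of_lt ht.1, ht.2⟩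
    have hmem' := hmem t ht'
    have htr : 0 < 1 - t * r := by nlinarith [ht.1, ht.2]
    have hd := stmt3_deriv_bound g M hM hg hIm hmem'
    rw [habs_t t ht'.1] at hd
    rw [norm_mul, ← hr_def]
    calc ‖deriv g ((t:ℂ)*z)‖ * r ≤ (c / (1 - t * r)) * r :=
          mul_le_mul_of_nonneg_right hd hr0
    _ = c * r / (1 - t * r) := by ring
  have hbint : IntervalIntegrable (fun t : ℝ => c * r / (1 - t * r))
      MeasureTheory.volume 0 1 := by
    apply ContinuousOn.intervalIntegrable
    rw [Set.uIcc_of_le zero_le_one]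
    apply ContinuousOn.div continuousOn_const (by fun_prop)
    intro t ht
    have : 0 < 1 - t * r := by nlinarith [ht.1, ht.2]
    exact ne_of_gt this
  have hbound : ‖g z - g 0‖ ≤ |∫ t in (0:ℝ)..1, c * r / (1 - t * r)| := by
    rw [← hFTC]
    apply intervalIntegral.norm_integral_le_abs_of_norm_le _ hbint
    rw [Set.uIoc_of_le zero_le_one]
    filter_upwards [MeasureTheory.ae_restrict_mem measurableSet_Ioc] with t ht
    exact hptb t ht
  have hval : ∫ t in (0:ℝ)..1, c * r / (1 - t * r) = c * (-Real.log (1 - r)) := by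
    have hD : ∀ t ∈ Set.uIcc (0:ℝ) 1,
        HasDerivAt (fun t : ℝ => -c * Real.log (1 - t * r)) (c * r / (1 - t * r)) t := by
      intro t ht
      rw [Set.uIcc_of_le zero_le_one] at ht
      have hpos : 0 < 1 - t * r := by nlinarith [ht.1, ht.2]
      have h1 : HasDerivAt (fun t : ℝ => 1 - t * r) (-r) t := by
        simpa using ((hasDerivAt_id t).mul_const r).const_sub 1
      have h2 : HasDerivAt (fun t : ℝ => Real.log (1 - t * r)) ((1 - t*r)⁻¹ * (-r)) t :=
        (Real.hasDerivAt_log hpos.ne').comp (h := fun t : ℝ => 1 - t * r) t h1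
      have h3 := h2.const_mul (-c)
      refine h3.congr_deriv ?_
      ring
    rw [intervalIntegral.integral_eq_sub_of_hasDerivAt hD hbint]
    simp [Real.log_one]
  have hlog : 0 ≤ -Real.log (1 - r) := by
    have := Real.log_nonpos (by linarith) (by linarith : (1:ℝ) - r ≤ 1)
    linarith
  have hkey : ‖g z - g 0‖ ≤ c * (-Real.log (1 - r)) := by
    rw [hval, _root_.abs_of_nonneg (mul_nonneg hc.le hlog)] at hbound
    exact hbound
  have hre : (g 0).re + c * Real.log (1 - r) ≤ (g z).re := by
    have habs : |(g z - g 0).re| ≤ ‖g z - g 0‖ := by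
      exact Complex.abs_re_le_norm _
    rw [Complex.sub_re] at habs
    have h2 : -((g z).re - (g 0).re) ≤ |(g z).re - (g 0).re| := neg_le_abs _
    linarith [hkey]
  rw [← hexp z hz, Complex.norm_exp, Real.rpow_def_of_pos h1r, ← Real.exp_add]
  apply Real.exp_le_exp.2
  nlinarith [hre]
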